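/- arXiv:0804.1649 — 5 statements merged into one kernel-verified Lean document; each statement's English description precedes it below -/
import Mathlib

section
/- For non-constant rational functions g, h over a field K, the degree of the composition g∘h equals (deg g)·(deg h), where the degree of a rational function f = f_N/f_D in lowest terms is max(deg f_N, deg f_D). -/
open Polynomial

/-- Composition of rational functions: `ratComp g h = g ∘ h = g(h)`. -/
noncomputable def ratComp {K : Type*} [Field K] (g h : RatFunc K) : RatFunc K :=
  RatFunc.eval (algebraMap K (RatFunc K)) h g

/-- Degree of a rational function `f = f_N / f_D` in lowest terms:
`max (deg f_N) (deg f_D)`. -/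
noncomputable def ratDeg {K : Type*} [Field K] (f : RatFunc K) : ℕ :=
  max f.num.natDegree f.denom.natDegree

/-- The fixing group of `f`: Möbius transformations (degree-1 rational
functions) `u` with `f ∘ u = f`. -/
noncomputable def fixGroup {K : Type*} [Field K] (f : RatFunc K) : Set (RatFunc K) :=
  {u | ratDeg u = 1 ∧ ratComp f u = f}

namespace RatDegAux

open Finset

variable {K : Type*} [Field K]

/-- Homogenization-composition: `phi a b m P = "b^m * P(a/b)"`. -/
noncomputable def phi (a b : K[X]) (m : ℕ) (P : K[X]) : K[X] :=
  ∑ i ∈ Finset.range (m + 1), C (P.coeff i) * a ^ i * b ^ (m - i)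

theorem phi_map (a : K[X]) {b : K[X]} (hb : b ≠ 0) {m : ℕ} {P : K[X]}
    (hP : P.natDegree ≤ m) :
    algebraMap K[X] (RatFunc K) (phi a b m P) =
      (algebraMap K[X] (RatFunc K) b) ^ m *
        aeval (algebraMap K[X] (RatFunc K) a / algebraMap K[X] (RatFunc K) b) P := by
  set φ := algebraMap K[X] (RatFunc K)
  set x : RatFunc K := φ a / φ b with hx
  have hbne : φ b ≠ 0 := RatFunc.algebraMap_ne_zero hb
  have hax : φ a = x * φ b := by rw [hx, div_mul_cancel₀ _ hbne]
  rw [aeval_eq_sum_range' (lt_of_le_of_lt hP (Nat.lt_succ_self m))]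
  rw [phi, map_sum, Finset.mul_sum]
  refine Finset.sum_congr rfl fun i hi => ?_
  have him : i ≤ m := Nat.lt_succ_iff.mp (Finset.mem_range.mp hi)
  rw [map_mul, map_mul, map_pow, map_pow, hax, mul_pow, Algebra.smul_def]
  have : algebraMap K (RatFunc K) (P.coeff i) = φ (C (P.coeff i)) := by
    rw [IsScalarTower.algebraMap_apply K K[X] (RatFunc K)]
    rfl
  rw [this, mul_assoc, mul_assoc, ← pow_add, Nat.add_sub_cancel' him]
  ring


theorem phi_one (a b : K[X]) (m : ℕ) : phi a b m 1 = b ^ m := by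
  rw [phi]
  rw [Finset.sum_eq_single 0]
  · simp
  · intro i _ hi
    simp [Polynomial.coeff_one, hi]
  · simp

theorem phi_mul (a : K[X]) {b : K[X]} (hb : b ≠ 0) {m l : ℕ} {P Q : K[X]}
    (hP : P.natDegree ≤ m) (hQ : Q.natDegree ≤ l) :
    phi a b (m + l) (P * Q) = phi a b m P * phi a b l Q := by
  apply RatFunc.algebraMap_injective K
  have hPQ : (P * Q).natDegree ≤ m + l :=
    le_trans (natDegree_mul_le) (add_le_add hP hQ)
  rw [map_mul, phi_map a hb hPQ, phi_map a hb hP, phi_map a hb hQ, map_mul, pow_add]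
  ring

theorem phi_add (a b : K[X]) (m : ℕ) (P Q : K[X]) :
    phi a b m (P + Q) = phi a b m P + phi a b m Q := by
  rw [phi, phi, phi, ← Finset.sum_add_distrib]
  refine Finset.sum_congr rfl fun i _ => ?_
  rw [coeff_add, C_add]
  ring

theorem phi_X (a b : K[X]) : phi a b 1 X = a := by
  rw [phi]
  simp [Finset.sum_range_succ]


theorem phi_ne_zero_of_pos {a b : K[X]} (hab : IsCoprime a b) (hb : b ≠ 0)
    (ha : 0 < a.natDegree) :
    ∀ m : ℕ, ∀ Q : K[X], Q ≠ 0 → Q.natDegree ≤ m → phi a b m Q ≠ 0 := by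
  have ha0 : a ≠ 0 := fun h => by simp [h] at ha
  intro m
  induction m with
  | zero =>
    intro Q hQ hQm
    have : Q = C (Q.coeff 0) := (Polynomial.eq_C_of_natDegree_le_zero hQm)
    have hc : Q.coeff 0 ≠ 0 := fun h => hQ (by rw [this, h, map_zero])
    rw [phi]
    simpa using fun h => hc (by simpa using h)
  | succ m ih =>
    intro Q hQ hQm hphi
    by_cases hc0 : Q.coeff 0 = 0
    · -- X divides Q
      obtain ⟨Q₁, rfl⟩ : X ∣ Q := Polynomial.X_dvd_iff.mpr hc0
      have hQ₁ : Q₁ ≠ 0 := fun h => hQ (by rw [h, mul_zero])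
      have hdeg : Q₁.natDegree ≤ m := by
        have := Polynomial.natDegree_mul (Polynomial.X_ne_zero (R := K)) hQ₁
        rw [this, Polynomial.natDegree_X] at hQm
        omega
      have : phi a b (1 + m) (X * Q₁) = a * phi a b m Q₁ := by
        rw [phi_mul a hb (by simp) hdeg, phi_X]
      rw [show m + 1 = 1 + m by omega, this] at hphi
      exact ih Q₁ hQ₁ hdeg (by
        rcases mul_eq_zero.mp hphi with h | h
        · exact absurd h ha0
        · exact h)
    · -- constant term nonzero: a divides C (Q.coeff 0) * b^(m+1)
      have hsum : phi a b (m + 1) Q =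
          (∑ i ∈ Finset.range (m + 1),
            C (Q.coeff (i + 1)) * a ^ (i + 1) * b ^ (m + 1 - (i + 1))) +
            C (Q.coeff 0) * a ^ 0 * b ^ (m + 1 - 0) := by
        rw [phi, Finset.sum_range_succ']
      have hdvd : a ∣ C (Q.coeff 0) * b ^ (m + 1) := by
        have h2 := hsum.symm.trans hphi
        have h4 : (∑ i ∈ Finset.range (m + 1),
              C (Q.coeff (i + 1)) * a ^ (i + 1) * b ^ (m + 1 - (i + 1))) =
            a * ∑ i ∈ Finset.range (m + 1),
              C (Q.coeff (i + 1)) * a ^ i * b ^ (m + 1 - (i + 1)) := by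
          rw [Finset.mul_sum]
          exact Finset.sum_congr rfl fun i _ => by ring
        refine ⟨-∑ i ∈ Finset.range (m + 1),
              C (Q.coeff (i + 1)) * a ^ i * b ^ (m + 1 - (i + 1)), ?_⟩
        simp only [pow_zero, one_mul, Nat.sub_zero] at h2
        linear_combination h2 - h4
      have hdvd2 : a ∣ C (Q.coeff 0) :=
        (hab.pow_right (n := m + 1)).dvd_of_dvd_mul_right hdvd
      have : a.natDegree ≤ 0 := by
        simpa using Polynomial.natDegree_le_of_dvd hdvd2 (by simpa using hc0)
      omega


theorem phi_swap (a b : K[X]) {m : ℕ} {Q : K[X]} (hQ : Q.natDegree ≤ m) :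
    phi a b m Q = phi b a m (reflect m Q) := by
  rw [phi, phi, ← Finset.sum_range_reflect]
  refine Finset.sum_congr rfl fun i hi => ?_
  have him : i ≤ m := Nat.lt_succ_iff.mp (Finset.mem_range.mp hi)
  rw [coeff_reflect, revAt_le him]
  rw [show m + 1 - 1 - i = m - i by omega, Nat.sub_sub_self him]
  ring

theorem natDegree_reflect_le {m : ℕ} {Q : K[X]} (hQ : Q.natDegree ≤ m) :
    (reflect m Q).natDegree ≤ m := by
  apply Polynomial.natDegree_le_iff_coeff_eq_zero.mpr
  intro i hi
  rw [coeff_reflect]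
  apply Polynomial.coeff_eq_zero_of_natDegree_lt
  rcases le_or_gt i m with h | h
  · omega
  · rw [revAt_eq_self_of_lt h]; omega

theorem phi_ne_zero {a b : K[X]} (hab : IsCoprime a b) (ha : a ≠ 0) (hb : b ≠ 0)
    (hn : 0 < max a.natDegree b.natDegree) {m : ℕ} {Q : K[X]} (hQ : Q ≠ 0)
    (hQm : Q.natDegree ≤ m) : phi a b m Q ≠ 0 := by
  rcases Nat.eq_zero_or_pos a.natDegree with hzero | hpos
  case inr => exact phi_ne_zero_of_pos hab hb hpos m Q hQ hQm
  case inl =>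
    have hbpos : 0 < b.natDegree := by omega
    rw [phi_swap a b hQm]
    exact phi_ne_zero_of_pos hab.symm ha hbpos m _
      (fun h => hQ (reflect_eq_zero_iff.mp h)) (natDegree_reflect_le hQm)

theorem phi_natDegree_le (a b : K[X]) (m : ℕ) (P : K[X]) :
    (phi a b m P).natDegree ≤ m * max a.natDegree b.natDegree := by
  apply Polynomial.natDegree_sum_le_of_forall_le
  intro i hi
  have him : i ≤ m := Nat.lt_succ_iff.mp (Finset.mem_range.mp hi)
  calc (C (P.coeff i) * a ^ i * b ^ (m - i)).natDegree
      ≤ (C (P.coeff i) * a ^ i).natDegree + (b ^ (m - i)).natDegree :=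
        Polynomial.natDegree_mul_le
    _ ≤ ((C (P.coeff i)).natDegree + (a ^ i).natDegree) + (b ^ (m - i)).natDegree :=
        Nat.add_le_add_right Polynomial.natDegree_mul_le _
    _ ≤ (0 + i * a.natDegree) + (m - i) * b.natDegree := by
        gcongr
        · simp
        · exact Polynomial.natDegree_pow_le
        · exact Polynomial.natDegree_pow_le
    _ ≤ i * max a.natDegree b.natDegree + (m - i) * max a.natDegree b.natDegree := by
        rw [zero_add]
        gcongr
        · exact le_max_left _ _
        · exact le_max_right _ _
    _ = (i + (m - i)) * max a.natDegree b.natDegree := by rw [add_mul]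
    _ = m * max a.natDegree b.natDegree := by rw [Nat.add_sub_cancel' him]

/-- The Bezout identity pushed through `phi`. -/
theorem phi_bezout {a b : K[X]} (hb : b ≠ 0) {P Q u v : K[X]}
    (huv : u * P + v * Q = 1) {m e : ℕ} (hP : P.natDegree ≤ m) (hQ : Q.natDegree ≤ m)
    (hu : u.natDegree ≤ e) (hv : v.natDegree ≤ e) :
    b ^ (e + m) = phi a b e u * phi a b m P + phi a b e v * phi a b m Q := by
  have := phi_one a b (e + m)
  rw [← huv, phi_add, phi_mul a hb hu hP, phi_mul a hb hv hQ] at this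
  exact this.symm


theorem coeff_top_or {a b P Q : K[X]} (hPQ : IsCoprime P Q) (hb : b ≠ 0)
    (hd : a.natDegree ≤ b.natDegree) {m : ℕ} (hP : P.natDegree ≤ m) (hQ : Q.natDegree ≤ m) :
    (phi a b m P).coeff (m * b.natDegree) ≠ 0 ∨
      (phi a b m Q).coeff (m * b.natDegree) ≠ 0 := by
  by_contra hcon
  push_neg at hcon
  obtain ⟨h1, h2⟩ := hcon
  obtain ⟨u, v, huv⟩ := hPQ
  set e := max u.natDegree v.natDegree with he
  have key := phi_bezout (a := a) hb huv hP hQ (le_max_left _ _) (le_max_right _ _)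
  have hdeg : ∀ (l : ℕ) (R : K[X]), (phi a b l R).natDegree ≤ l * b.natDegree := by
    intro l R
    have := phi_natDegree_le a b l R
    rwa [max_eq_right hd] at this
  have hL : (b ^ (e + m)).coeff ((e + m) * b.natDegree) = b.leadingCoeff ^ (e + m) :=
    coeff_pow_mul_natDegree b (e + m)
  have hkey := congrArg (fun p => Polynomial.coeff p ((e + m) * b.natDegree)) key
  rw [hL, add_mul, coeff_add,
    coeff_mul_add_eq_of_natDegree_le (hdeg e u) (hdeg m P),
    coeff_mul_add_eq_of_natDegree_le (hdeg e v) (hdeg m Q), h1, h2, mul_zero, mul_zero,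
    add_zero] at hkey
  exact pow_ne_zero _ (leadingCoeff_ne_zero.mpr hb) hkey

theorem coeff_top_deg_eq {a b Q : K[X]} (hd : b.natDegree < a.natDegree) (hQ0 : Q ≠ 0)
    {m : ℕ} (hQ : Q.natDegree = m) :
    (phi a b m Q).coeff (m * a.natDegree) ≠ 0 := by
  have ha0 : a ≠ 0 := fun h => by simp [h] at hd
  rw [phi, Finset.sum_range_succ, coeff_add]
  have hzero : (∑ i ∈ Finset.range m, C (Q.coeff i) * a ^ i * b ^ (m - i)).coeff
      (m * a.natDegree) = 0 := by
    rw [Polynomial.finset_sum_coeff]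
    apply Finset.sum_eq_zero
    intro i hi
    have him : i < m := Finset.mem_range.mp hi
    apply Polynomial.coeff_eq_zero_of_natDegree_lt
    calc (C (Q.coeff i) * a ^ i * b ^ (m - i)).natDegree
        ≤ ((C (Q.coeff i)).natDegree + (a ^ i).natDegree) + (b ^ (m - i)).natDegree :=
          le_trans Polynomial.natDegree_mul_le
            (Nat.add_le_add_right Polynomial.natDegree_mul_le _)
      _ ≤ (0 + i * a.natDegree) + (m - i) * b.natDegree := by
          gcongr
          · simp
          · exact Polynomial.natDegree_pow_le
          · exact Polynomial.natDegree_pow_le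
      _ < m * a.natDegree := by
          rw [zero_add]
          have h1 : (m - i) * b.natDegree < (m - i) * a.natDegree :=
            Nat.mul_lt_mul_of_pos_left hd (by omega)

          have h2 : i * a.natDegree + (m - i) * a.natDegree = m * a.natDegree := by
            rw [← add_mul, Nat.add_sub_cancel' (le_of_lt him)]
          omega
  rw [hzero, zero_add, Nat.sub_self, pow_zero, mul_one, coeff_C_mul]
  rw [coeff_pow_mul_natDegree]
  exact mul_ne_zero (by rw [← hQ]; exact Polynomial.leadingCoeff_ne_zero.mpr hQ0)
    (pow_ne_zero _ (leadingCoeff_ne_zero.mpr ha0))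


theorem max_natDegree_phi {a b P Q : K[X]} (hPQ : IsCoprime P Q) (hb : b ≠ 0)
    (hP0 : P ≠ 0) (hQ0 : Q ≠ 0) :
    max (phi a b (max P.natDegree Q.natDegree) P).natDegree
        (phi a b (max P.natDegree Q.natDegree) Q).natDegree =
      max P.natDegree Q.natDegree * max a.natDegree b.natDegree := by
  set m := max P.natDegree Q.natDegree with hm
  set n := max a.natDegree b.natDegree with hn
  apply le_antisymm
  · exact max_le (phi_natDegree_le a b m P) (phi_natDegree_le a b m Q)
  · rcases le_or_gt a.natDegree b.natDegree with hd | hd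
    · have hnb : n = b.natDegree := max_eq_right hd
      rcases coeff_top_or hPQ hb hd (le_max_left _ _) (le_max_right _ _) with h | h
      · calc m * n = m * b.natDegree := by rw [hnb]
          _ ≤ (phi a b m P).natDegree := le_natDegree_of_ne_zero h
          _ ≤ _ := le_max_left _ _
      · calc m * n = m * b.natDegree := by rw [hnb]
          _ ≤ (phi a b m Q).natDegree := le_natDegree_of_ne_zero h
          _ ≤ _ := le_max_right _ _
    · have hna : n = a.natDegree := max_eq_left (le_of_lt hd)
      rcases max_choice P.natDegree Q.natDegree with hc | hc
      · have h := coeff_top_deg_eq hd hP0 (hc.symm : P.natDegree = m)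
        calc m * n = m * a.natDegree := by rw [hna]
          _ ≤ (phi a b m P).natDegree := le_natDegree_of_ne_zero h
          _ ≤ _ := le_max_left _ _
      · have h := coeff_top_deg_eq hd hQ0 (hc.symm : Q.natDegree = m)
        calc m * n = m * a.natDegree := by rw [hna]
          _ ≤ (phi a b m Q).natDegree := le_natDegree_of_ne_zero h
          _ ≤ _ := le_max_right _ _

theorem phi_isCoprime_right {a b P : K[X]} (hab : IsCoprime a b) (hP0 : P ≠ 0)
    {m : ℕ} (hm : P.natDegree = m) : IsCoprime (phi a b m P) b := by
  have hsum : phi a b m P =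
      C (P.coeff m) * a ^ m +
        b * ∑ i ∈ Finset.range m, C (P.coeff i) * a ^ i * b ^ (m - i - 1) := by
    rw [phi, Finset.sum_range_succ, Nat.sub_self, pow_zero, mul_one, add_comm]
    congr 1
    rw [Finset.mul_sum]
    refine Finset.sum_congr rfl fun i hi => ?_
    have him : i < m := Finset.mem_range.mp hi
    have hb1 : b ^ (m - i) = b * b ^ (m - i - 1) := by
      rw [← pow_succ']
      congr 1
      omega
    rw [hb1]
    ring
  rw [hsum]
  apply IsCoprime.add_mul_left_left
  have hc : IsUnit (C (P.coeff m)) := by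
    rw [isUnit_C]
    apply IsUnit.mk0
    rw [← hm]
    exact Polynomial.leadingCoeff_ne_zero.mpr hP0
  exact (isCoprime_mul_unit_left_left hc _ _).mpr (hab.pow_left)

theorem phi_isCoprime {a b P Q : K[X]} (hab : IsCoprime a b) (hPQ : IsCoprime P Q)
    (hb : b ≠ 0) (hP0 : P ≠ 0) (hQ0 : Q ≠ 0) :
    IsCoprime (phi a b (max P.natDegree Q.natDegree) P)
      (phi a b (max P.natDegree Q.natDegree) Q) := by
  set m := max P.natDegree Q.natDegree with hm
  obtain ⟨u, v, huv⟩ := hPQ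
  set e := max u.natDegree v.natDegree with he
  have key := phi_bezout (a := a) hb huv (le_max_left P.natDegree Q.natDegree)
    (le_max_right P.natDegree Q.natDegree) (le_max_left _ _) (le_max_right _ _)
  rcases max_choice P.natDegree Q.natDegree with hc | hc
  · have hAb : IsCoprime (phi a b m P) (b ^ (e + m)) :=
      (phi_isCoprime_right hab hP0 hc.symm).pow_right
    obtain ⟨s, t, hst⟩ := hAb
    exact ⟨s + t * phi a b e u, t * phi a b e v, by linear_combination hst - t * key⟩
  · have hBb : IsCoprime (phi a b m Q) (b ^ (e + m)) :=
      (phi_isCoprime_right hab hQ0 hc.symm).pow_right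
    obtain ⟨s, t, hst⟩ := hBb
    exact ⟨t * phi a b e u, s + t * phi a b e v, by linear_combination hst - t * key⟩

end RatDegAux

open Finset RatDegAux in
/-- The degree of a composition of non-constant rational functions is the
product of the degrees. -/
theorem ratDeg_comp {K : Type*} [Field K] (g h : RatFunc K)
    (hg : 0 < ratDeg g) (hh : 0 < ratDeg h) :
    ratDeg (ratComp g h) = ratDeg g * ratDeg h := by
  have hg0 : g ≠ 0 := by
    rintro rfl
    simp [ratDeg] at hg
  have hh0 : h ≠ 0 := by
    rintro rfl
    simp [ratDeg] at hh
  set P : K[X] := g.num with hPdef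
  set Q : K[X] := g.denom with hQdef
  set a : K[X] := h.num with hadef
  set b : K[X] := h.denom with hbdef
  have hP0 : P ≠ 0 := RatFunc.num_ne_zero hg0
  have hQ0 : Q ≠ 0 := g.denom_ne_zero
  have ha0 : a ≠ 0 := RatFunc.num_ne_zero hh0
  have hb0 : b ≠ 0 := h.denom_ne_zero
  have hab : IsCoprime a b := RatFunc.isCoprime_num_denom h
  have hPQ : IsCoprime P Q := RatFunc.isCoprime_num_denom g
  set m : ℕ := max P.natDegree Q.natDegree with hmdef
  have hmg : ratDeg g = m := rfl
  have hnh : ratDeg h = max a.natDegree b.natDegree := rfl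
  set A : K[X] := phi a b m P with hAdef
  set B : K[X] := phi a b m Q with hBdef
  have hA0 : A ≠ 0 := phi_ne_zero hab ha0 hb0 (by rw [← hnh]; exact hh) hP0 (le_max_left _ _)
  have hB0 : B ≠ 0 := phi_ne_zero hab ha0 hb0 (by rw [← hnh]; exact hh) hQ0 (le_max_right _ _)
  set φ := algebraMap K[X] (RatFunc K) with hφ
  have hx : h = φ a / φ b := (RatFunc.num_div_denom h).symm
  have hcomp : ratComp g h = φ A / φ B := by
    rw [ratComp, RatFunc.eval, ← Polynomial.aeval_def, ← Polynomial.aeval_def]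
    have e1 : φ A = φ b ^ m * aeval h P := by
      rw [hAdef, phi_map a hb0 (le_max_left _ _), ← hx]
    have e2 : φ B = φ b ^ m * aeval h Q := by
      rw [hBdef, phi_map a hb0 (le_max_right _ _), ← hx]
    rw [e1, e2, mul_div_mul_left _ _ (pow_ne_zero m (RatFunc.algebraMap_ne_zero hb0))]
  have hAB : IsCoprime A B := phi_isCoprime hab hPQ hb0 hP0 hQ0
  set x : RatFunc K := φ A / φ B with hxdef
  have hnum_dvd : x.num ∣ A := RatFunc.num_div_dvd A hB0
  have hdenom_dvd : x.denom ∣ B := RatFunc.denom_div_dvd A B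
  have heq : x.num * B = A * x.denom := (RatFunc.num_mul_eq_mul_denom_iff hB0).mpr rfl
  have hA_dvd : A ∣ x.num := hAB.dvd_of_dvd_mul_right ⟨x.denom, heq⟩
  have hB_dvd : B ∣ x.denom :=
    hAB.symm.dvd_of_dvd_mul_right (⟨x.num, by linear_combination -heq⟩ : B ∣ x.denom * A)
  have hx0 : x ≠ 0 :=
    div_ne_zero (RatFunc.algebraMap_ne_zero hA0) (RatFunc.algebraMap_ne_zero hB0)
  have hd1 : x.num.natDegree = A.natDegree :=
    le_antisymm (Polynomial.natDegree_le_of_dvd hnum_dvd hA0)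
      (Polynomial.natDegree_le_of_dvd hA_dvd (RatFunc.num_ne_zero hx0))
  have hd2 : x.denom.natDegree = B.natDegree :=
    le_antisymm (Polynomial.natDegree_le_of_dvd hdenom_dvd hB0)
      (Polynomial.natDegree_le_of_dvd hB_dvd x.denom_ne_zero)
  rw [hcomp]
  rw [show ratDeg x = max x.num.natDegree x.denom.natDegree from rfl, hd1, hd2,
    hmg, hnh, hAdef, hBdef]
  exact max_natDegree_phi hPQ hb0 hP0 hQ0
end

section
/- If f ∈ K[x] is a non-constant polynomial and f = g∘h for rational functions g, h ∈ K(x)\K, then there exists a Möbius unit u ∈ K(x) of degree 1 such that g∘u and u⁻¹∘h are both polynomials. -/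
open Polynomial

namespace PolyDecompAux

variable {K : Type*} [Field K]

noncomputable def homog (a b p : K[X]) (m : ℕ) : K[X] :=
  ∑ i ∈ Finset.range (m + 1), C (p.coeff i) * a ^ i * b ^ (m - i)

theorem ratComp_eq (g h : RatFunc K) :
    ratComp g h = Polynomial.aeval h g.num / Polynomial.aeval h g.denom := by
  simp [ratComp, RatFunc.eval, Polynomial.aeval_def]

theorem map_homog (a p : K[X]) {b : K[X]} (hb : b ≠ 0) {n : ℕ} (hp : p.natDegree ≤ n) :
    algebraMap K[X] (RatFunc K) (homog a b p n) =
      (algebraMap K[X] (RatFunc K) b) ^ n *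
        Polynomial.aeval (algebraMap K[X] (RatFunc K) a / algebraMap K[X] (RatFunc K) b) p := by
  rw [Polynomial.aeval_eq_sum_range' (Nat.lt_succ_of_le hp), homog, map_sum, Finset.mul_sum]
  refine Finset.sum_congr rfl fun i hi => ?_
  have hin : i ≤ n := Nat.lt_succ_iff.mp (Finset.mem_range.mp hi)
  have hbi : (algebraMap K[X] (RatFunc K) b) ≠ 0 := RatFunc.algebraMap_ne_zero hb
  rw [Algebra.smul_def, IsScalarTower.algebraMap_apply K K[X] (RatFunc K),
    Polynomial.algebraMap_eq, map_mul, map_mul, map_pow, map_pow, div_pow,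
    pow_sub₀ _ hbi hin]
  field_simp

theorem num_denom_of_coprime {p q : K[X]} (hq : q.Monic) (hpq : IsCoprime p q) :
    (algebraMap K[X] (RatFunc K) p / algebraMap K[X] (RatFunc K) q).num = p ∧
    (algebraMap K[X] (RatFunc K) p / algebraMap K[X] (RatFunc K) q).denom = q := by
  set x := algebraMap K[X] (RatFunc K) p / algebraMap K[X] (RatFunc K) q with hx
  have hq0 : q ≠ 0 := hq.ne_zero
  have key : x.num * q = p * x.denom := by
    apply RatFunc.algebraMap_injective K
    rw [map_mul, map_mul]
    rw [← div_eq_div_iff (RatFunc.algebraMap_ne_zero (RatFunc.denom_ne_zero x))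
      (RatFunc.algebraMap_ne_zero hq0), RatFunc.num_div_denom]
  have hqd : q ∣ x.denom := by
    refine hpq.symm.dvd_of_dvd_mul_left ?_
    exact ⟨x.num, by rw [← key, mul_comm]⟩
  have hdq : x.denom ∣ q := by
    refine (RatFunc.isCoprime_num_denom x).symm.dvd_of_dvd_mul_left ?_
    exact ⟨p, by rw [key, mul_comm]⟩
  have hdeq : x.denom = q :=
    Polynomial.eq_of_monic_of_associated (RatFunc.monic_denom x) hq
      (associated_of_dvd_dvd hdq hqd)
  refine ⟨?_, hdeq⟩
  have := key
  rw [hdeq] at this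
  exact mul_right_cancel₀ hq0 this

theorem homog_coprime {a b : K[X]} (p : K[X]) (n : ℕ) (hab : IsCoprime a b)
    (hpn : p.coeff n ≠ 0) : IsCoprime (homog a b p n) b := by
  have hsplit : homog a b p n =
      C (p.coeff n) * a ^ n + b * ∑ i ∈ Finset.range n, C (p.coeff i) * a ^ i * b ^ (n - 1 - i) := by
    rw [homog, Finset.sum_range_succ, Nat.sub_self, pow_zero, mul_one, add_comm, Finset.mul_sum]
    congr 1
    refine Finset.sum_congr rfl fun i hi => ?_
    have hi' : i < n := Finset.mem_range.mp hi
    have : n - i = (n - 1 - i) + 1 := by omega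
    rw [this, pow_succ]
    ring
  rw [hsplit]
  apply IsCoprime.add_mul_left_left
  apply IsCoprime.mul_left
  · exact ⟨C (p.coeff n)⁻¹, 0, by simp [← C_mul, inv_mul_cancel₀ hpn]⟩
  · exact hab.pow_left

end PolyDecompAux

open PolyDecompAux

/-- If a non-constant polynomial decomposes as a composition of rational
functions `g ∘ h`, then there is a Möbius unit `u` such that `g ∘ u` and
`u⁻¹ ∘ h` are polynomials. -/
theorem poly_decomposition_of_ratFunc {K : Type*} [Field K] (f : K[X]) (g h : RatFunc K)
    (hf : 0 < f.natDegree) (hg : 0 < ratDeg g) (hh : 0 < ratDeg h)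
    (e : algebraMap K[X] (RatFunc K) f = ratComp g h) :
    ∃ u v : RatFunc K, ratDeg u = 1 ∧
      ratComp u v = RatFunc.X ∧ ratComp v u = RatFunc.X ∧
      (∃ G : K[X], ratComp g u = algebraMap K[X] (RatFunc K) G) ∧
      (∃ H : K[X], ratComp v h = algebraMap K[X] (RatFunc K) H) := by
  classical
  have hfne : f ≠ 0 := fun h0 => by simp [h0] at hf
  have hgne : g ≠ 0 := by rintro rfl; simp [ratDeg] at hg
  have hhne : h ≠ 0 := by rintro rfl; simp [ratDeg] at hh
  set gN := g.num with hgNdef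
  set gD := g.denom with hgDdef
  set hN := h.num with hhNdef
  set hD := h.denom with hhDdef
  set n := max gN.natDegree gD.natDegree with hndef
  set s := hN.natDegree with hsdef
  set t := hD.natDegree with htdef
  have cop_h : IsCoprime hN hD := RatFunc.isCoprime_num_denom h
  have hDne : hD ≠ 0 := RatFunc.denom_ne_zero h
  have hNne : hN ≠ 0 := RatFunc.num_ne_zero hhne
  have gNne : gN ≠ 0 := RatFunc.num_ne_zero hgne
  have gDne : gD ≠ 0 := RatFunc.denom_ne_zero g
  have hgN : gN.natDegree ≤ n := le_max_left _ _
  have hgD : gD.natDegree ≤ n := le_max_right _ _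
  have hval : algebraMap K[X] (RatFunc K) hN / algebraMap K[X] (RatFunc K) hD = h :=
    RatFunc.num_div_denom h
  have e' : algebraMap K[X] (RatFunc K) f =
      Polynomial.aeval h gN / Polynomial.aeval h gD := by rw [e, ratComp_eq]
  have hDen : Polynomial.aeval h gD ≠ 0 := by
    intro h0
    rw [h0, div_zero] at e'
    exact RatFunc.algebraMap_ne_zero hfne e'
  have e2 : algebraMap K[X] (RatFunc K) f * Polynomial.aeval h gD = Polynomial.aeval h gN := by
    rw [e']; field_simp
  have mGN : algebraMap K[X] (RatFunc K) (homog hN hD gN n) =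
      (algebraMap K[X] (RatFunc K) hD) ^ n * Polynomial.aeval h gN := by
    rw [map_homog hN gN hDne hgN, hval]
  have mGD : algebraMap K[X] (RatFunc K) (homog hN hD gD n) =
      (algebraMap K[X] (RatFunc K) hD) ^ n * Polynomial.aeval h gD := by
    rw [map_homog hN gD hDne hgD, hval]
  have fGD : f * homog hN hD gD n = homog hN hD gN n := by
    apply RatFunc.algebraMap_injective K
    rw [map_mul, mGD, mGN, ← e2]; ring
  obtain ⟨P, Q, hPQ⟩ := RatFunc.isCoprime_num_denom g
  set m := max P.natDegree Q.natDegree with hmdef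
  have key3 : homog hN hD P m * homog hN hD gN n + homog hN hD Q m * homog hN hD gD n
      = hD ^ (m + n) := by
    apply RatFunc.algebraMap_injective K
    have haux : Polynomial.aeval h P * Polynomial.aeval h gN
        + Polynomial.aeval h Q * Polynomial.aeval h gD = 1 := by
      rw [← map_mul, ← map_mul, ← map_add, hPQ, map_one]
    rw [map_add, map_mul, map_mul, mGN, mGD, map_homog hN P hDne (le_max_left _ _),
      map_homog hN Q hDne (le_max_right _ _), hval, map_pow, pow_add]
    linear_combination (algebraMap K[X] (RatFunc K) hD ^ m
      * algebraMap K[X] (RatFunc K) hD ^ n) * haux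
  have hdvd1 : homog hN hD gD n ∣ homog hN hD gN n := ⟨f, by rw [← fGD]; ring⟩
  have hdvd2 : homog hN hD gD n ∣ hD ^ (m + n) := by
    rw [← key3]
    exact dvd_add (hdvd1.mul_left _) (dvd_mul_left _ _)
  have hunit : IsUnit (homog hN hD gD n) := by
    rcases max_choice gN.natDegree gD.natDegree with hmax | hmax
    · have hco : gN.coeff n ≠ 0 := by
        rw [hndef, hmax]
        exact fun h0 => gNne (Polynomial.leadingCoeff_eq_zero.mp h0)
      have cGN : IsCoprime (homog hN hD gN n) hD := homog_coprime gN n cop_h hco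
      exact (cGN.pow_right).isUnit_of_dvd' hdvd1 hdvd2
    · have hco : gD.coeff n ≠ 0 := by
        rw [hndef, hmax]
        exact fun h0 => gDne (Polynomial.leadingCoeff_eq_zero.mp h0)
      have cGD : IsCoprime (homog hN hD gD n) hD := homog_coprime gD n cop_h hco
      exact (cGD.pow_right).isUnit_of_dvd' dvd_rfl hdvd2
  obtain ⟨c, hcu, hc⟩ := Polynomial.isUnit_iff.mp hunit
  have hc0 : c ≠ 0 := hcu.ne_zero
  have hn1 : 1 ≤ n := hg
  have haevalX : ∀ p : K[X], Polynomial.aeval (RatFunc.X : RatFunc K) p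
      = algebraMap K[X] (RatFunc K) p := fun p => by
    rw [← RatFunc.algebraMap_X, Polynomial.aeval_algebraMap_apply, Polynomial.aeval_X_left_apply]
  by_cases ht : t = 0
  · -- `h` is a polynomial and `g` is a polynomial
    have hD1 : hD = 1 := (Polynomial.Monic.natDegree_eq_zero (RatFunc.monic_denom h)).mp ht
    have hs1 : 1 ≤ s := by
      have := hh
      simp only [ratDeg, ← hhNdef, ← hhDdef, ← hsdef, ← htdef, ht] at this
      omega
    have hpoly : algebraMap K[X] (RatFunc K) hN = h := by
      rw [← hval, hD1, map_one, div_one]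
    have hcomp : gD.comp hN = C c := by
      apply RatFunc.algebraMap_injective K
      have : algebraMap K[X] (RatFunc K) (gD.comp hN) = Polynomial.aeval h gD := by
        rw [comp_eq_aeval, ← Polynomial.aeval_algebraMap_apply, hpoly]
      rw [this, hc, mGD, hD1, map_one, one_pow, one_mul]
    have hmul0 : gD.natDegree * hN.natDegree = 0 := by
      rw [← natDegree_comp, hcomp, natDegree_C]
    have hgD0 : gD.natDegree = 0 := by
      rcases Nat.mul_eq_zero.mp hmul0 with h0 | h0
      · exact h0
      · exact absurd h0 (by omega)
    have hgD1 : gD = 1 := (Polynomial.Monic.natDegree_eq_zero (RatFunc.monic_denom g)).mp hgD0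
    refine ⟨RatFunc.X, RatFunc.X, ?_, ?_, ?_, ⟨gN, ?_⟩, ⟨hN, ?_⟩⟩
    · simp [ratDeg, RatFunc.num_X, RatFunc.denom_X]
    · rw [ratComp_eq, RatFunc.num_X, RatFunc.denom_X]
      simp
    · rw [ratComp_eq, RatFunc.num_X, RatFunc.denom_X]
      simp
    · rw [ratComp_eq, ← hgNdef, ← hgDdef, hgD1, map_one, div_one, haevalX]
    · rw [ratComp_eq, RatFunc.num_X, RatFunc.denom_X, map_one, div_one, Polynomial.aeval_X,
        hpoly]
  · -- main case: `t ≥ 1`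
    have ht1 : 1 ≤ t := Nat.one_le_iff_ne_zero.mpr ht
    have hCmap : ∀ a : K, algebraMap K (RatFunc K) a = algebraMap K[X] (RatFunc K) (C a) :=
      fun a => by rw [IsScalarTower.algebraMap_apply K K[X] (RatFunc K), Polynomial.algebraMap_eq]
    -- (a) `gD` has degree exactly `n`
    have hgDn : gD.coeff n ≠ 0 := by
      intro h0
      have hdvd : hD ∣ C c := by
        rw [hc]
        apply Finset.dvd_sum
        intro i hi
        by_cases hin : i = n
        · rw [hin, h0]; simp
        · have hi' : i < n := lt_of_le_of_ne (Nat.lt_succ_iff.mp (Finset.mem_range.mp hi)) hin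
          exact ((dvd_pow_self hD (by omega : n - i ≠ 0)).mul_left _)
      have hle := Polynomial.natDegree_le_of_dvd hdvd (by
        intro h0'
        exact hc0 (by simpa using congrArg (fun p => Polynomial.coeff p 0) h0'))
      rw [natDegree_C] at hle
      omega
    have hkn : gD.natDegree = n := le_antisymm hgD (le_natDegree_of_ne_zero hgDn)
    have htop : gD.coeff n = 1 := by
      rw [← hkn]
      exact (RatFunc.monic_denom g).coeff_natDegree
    -- (b) `s ≤ t`
    have hst : s ≤ t := by
      by_contra hst
      push_neg at hst
      have hsplit : homog hN hD gD n =
          (∑ i ∈ Finset.range n, C (gD.coeff i) * hN ^ i * hD ^ (n - i)) + hN ^ n := by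
        rw [homog, Finset.sum_range_succ, htop, Nat.sub_self, pow_zero, mul_one, map_one, one_mul]
      have heq : hN ^ n = C c - ∑ i ∈ Finset.range n, C (gD.coeff i) * hN ^ i * hD ^ (n - i) := by
        rw [hc, hsplit]; ring
      have hdeg1 : (∑ i ∈ Finset.range n, C (gD.coeff i) * hN ^ i * hD ^ (n - i)).natDegree
          ≤ n * s - 1 := by
        apply Polynomial.natDegree_sum_le_of_forall_le
        intro i hi
        have hi' : i < n := Finset.mem_range.mp hi
        have hb1 : (C (gD.coeff i) * hN ^ i * hD ^ (n - i)).natDegree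
            ≤ i * s + (n - i) * t := by
          refine le_trans natDegree_mul_le ?_
          have h1 : (C (gD.coeff i) * hN ^ i).natDegree ≤ i * s :=
            le_trans natDegree_mul_le (by simp [natDegree_C, natDegree_pow, hsdef])
          have h2 : ((hD : K[X]) ^ (n - i)).natDegree ≤ (n - i) * t := by
            simp [natDegree_pow, htdef]
          omega
        have h2' : (n - i) * t < (n - i) * s := by
          apply mul_lt_mul_of_pos_left hst
          omega
        have h3' : i * s + (n - i) * s = n * s := by
          rw [← Nat.add_mul]
          congr 1
          omega
        omega
      have hdeg2 : ((hN : K[X]) ^ n).natDegree = n * s := by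
        simp [natDegree_pow, hsdef]
      have hCc : (C c - ∑ i ∈ Finset.range n, C (gD.coeff i) * hN ^ i * hD ^ (n - i)).natDegree
          ≤ n * s - 1 := by
        refine le_trans (natDegree_sub_le _ _) ?_
        refine max_le (by simp) hdeg1
      rw [← heq] at hCc
      rw [hdeg2] at hCc
      have hns : 0 < n * s := Nat.mul_pos (by omega) (by omega)
      omega
    -- (c) the tail `φ`
    set w := hN.coeff t with hwdef
    set φ := hN - C w * hD with hφdef
    have hφne : φ ≠ 0 := by
      intro h0
      have heq : hN = C w * hD := by rwa [hφdef, sub_eq_zero] at h0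
      have hdvd : hD ∣ hN := ⟨C w, by rw [heq]; ring⟩
      have := Polynomial.natDegree_eq_zero_of_isUnit (cop_h.isUnit_of_dvd' hdvd dvd_rfl)
      omega
    have hφt : φ.natDegree < t := by
      have hle : φ.natDegree ≤ t := by
        refine le_trans (natDegree_sub_le _ _) ?_
        refine max_le hst ?_
        exact le_trans natDegree_mul_le (by simp [natDegree_C, htdef])
      have hcoefft : φ.coeff t = 0 := by
        have hDt : hD.coeff t = 1 := (RatFunc.monic_denom h).coeff_natDegree
        rw [hφdef, coeff_sub, coeff_C_mul, hDt, mul_one, hwdef, sub_self]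
      rcases lt_or_eq_of_le hle with h' | h'
      · exact h'
      · exfalso
        apply hφne
        apply Polynomial.leadingCoeff_eq_zero.mp
        rw [Polynomial.leadingCoeff, h', hcoefft]
    -- (d) shifted denominator `G`
    set G := gD.comp (X + C w) with hGdef
    have hGcomp : G.comp (X - C w) = gD := by
      rw [hGdef, Polynomial.comp_assoc]
      simp
    have hGne : G ≠ 0 := by
      intro h0
      rw [h0, zero_comp] at hGcomp
      exact gDne hGcomp.symm
    have hGdeg : G.natDegree = n := by
      rw [hGdef, natDegree_comp, natDegree_X_add_C, mul_one, hkn]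
    -- (e) the key identity for `G`, `φ`
    have harg : algebraMap K[X] (RatFunc K) φ / algebraMap K[X] (RatFunc K) hD
        + algebraMap K (RatFunc K) w = h := by
      rw [← hval, hCmap, hφdef, map_sub, map_mul]
      have hDne' : algebraMap K[X] (RatFunc K) hD ≠ 0 := RatFunc.algebraMap_ne_zero hDne
      field_simp
      ring
    have E' : homog φ hD G n = C c := by
      apply RatFunc.algebraMap_injective K
      rw [map_homog φ G hDne (le_of_eq hGdeg), hc, mGD, hGdef, Polynomial.aeval_comp]
      simp only [map_add, Polynomial.aeval_X, Polynomial.aeval_C]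
      rw [harg]
    -- (f) conclude `φ` is constant and `G = C gn * X^n`
    set e' := φ.natDegree with hedef
    have htermdeg : ∀ l, G.coeff l ≠ 0 →
        (C (G.coeff l) * φ ^ l * hD ^ (n - l)).natDegree = l * e' + (n - l) * t := by
      intro l hl
      have hC : (C (G.coeff l) : K[X]) ≠ 0 := fun h0 => hl (by simpa using h0)
      rw [natDegree_mul (mul_ne_zero hC (pow_ne_zero _ hφne)) (pow_ne_zero _ hDne),
        natDegree_mul hC (pow_ne_zero _ hφne), natDegree_C, natDegree_pow, natDegree_pow,
        zero_add]
    have hGcn : G.coeff n ≠ 0 := by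
      intro h0
      apply hGne
      apply Polynomial.leadingCoeff_eq_zero.mp
      rw [Polynomial.leadingCoeff, hGdeg, h0]
    set S := (Finset.range (n + 1)).filter (fun l => G.coeff l ≠ 0) with hSdef
    have hnS : n ∈ S := Finset.mem_filter.mpr ⟨Finset.mem_range.mpr (by omega), hGcn⟩
    have hSne : S.Nonempty := ⟨n, hnS⟩
    have hsumS : ∑ l ∈ S, C (G.coeff l) * φ ^ l * hD ^ (n - l) = C c := by
      rw [← E', homog, hSdef]
      refine Finset.sum_filter_of_ne ?_
      intro x _ hx h0
      apply hx
      rw [h0]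
      simp
    have hl₁eq : S.min' hSne = n := by
      by_contra hne
      set l₁ := S.min' hSne with hl₁def
      have hl₁S : l₁ ∈ S := S.min'_mem hSne
      have hl₁n : l₁ ≤ n :=
        Nat.lt_succ_iff.mp (Finset.mem_range.mp (Finset.mem_filter.mp hl₁S).1)
      have hl₁lt : l₁ < n := lt_of_le_of_ne hl₁n hne
      have hGcl₁ : G.coeff l₁ ≠ 0 := (Finset.mem_filter.mp hl₁S).2
      have htermd := htermdeg l₁ hGcl₁
      have hrest : ∀ l ∈ S.erase l₁, (C (G.coeff l) * φ ^ l * hD ^ (n - l)).natDegree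
          ≤ l₁ * e' + (n - l₁) * t - 1 := by
        intro l hl
        have hlS := Finset.mem_erase.mp hl
        have hll : l₁ < l := lt_of_le_of_ne (S.min'_le l hlS.2) (Ne.symm hlS.1)
        have hln : l ≤ n :=
          Nat.lt_succ_iff.mp (Finset.mem_range.mp (Finset.mem_filter.mp hlS.2).1)
        rw [htermdeg l (Finset.mem_filter.mp hlS.2).2]
        have h1 : l * e' = l₁ * e' + (l - l₁) * e' := by
          rw [← Nat.add_mul]
          congr 1
          omega
        have h2 : (n - l₁) * t = (n - l) * t + (l - l₁) * t := by
          rw [← Nat.add_mul]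
          congr 1
          omega
        have h3 : (l - l₁) * e' < (l - l₁) * t := mul_lt_mul_of_pos_left hφt (by omega)
        omega
      have heqterm : C (G.coeff l₁) * φ ^ l₁ * hD ^ (n - l₁)
          = C c - ∑ l ∈ S.erase l₁, C (G.coeff l) * φ ^ l * hD ^ (n - l) := by
        rw [← hsumS, ← Finset.add_sum_erase S _ hl₁S]
        ring
      have hD1' : 1 ≤ (n - l₁) * t := Nat.mul_pos (by omega) (by omega)
      have hcontra : l₁ * e' + (n - l₁) * t ≤ l₁ * e' + (n - l₁) * t - 1 := by
        conv_lhs => rw [← htermd]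
        rw [heqterm]
        refine le_trans (natDegree_sub_le _ _) ?_
        refine max_le (by simp) ?_
        exact Polynomial.natDegree_sum_le_of_forall_le _ _ hrest
      omega
    have hcoeff_lt : ∀ l < n, G.coeff l = 0 := by
      intro l hl
      by_contra hne0
      have hlS : l ∈ S := Finset.mem_filter.mpr ⟨Finset.mem_range.mpr (by omega), hne0⟩
      have := S.min'_le l hlS
      omega
    have hsum_top : C (G.coeff n) * φ ^ n = C c := by
      have hhh : homog φ hD G n = C (G.coeff n) * φ ^ n := by
        rw [homog, Finset.sum_range_succ, Nat.sub_self, pow_zero, mul_one]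
        rw [Finset.sum_eq_zero, zero_add]
        intro i hi
        rw [hcoeff_lt i (Finset.mem_range.mp hi), map_zero, zero_mul, zero_mul]
      rw [← hhh, E']
    have he0 : e' = 0 := by
      have hdd : (C (G.coeff n) * φ ^ n).natDegree = n * e' := by
        rw [natDegree_C_mul hGcn, natDegree_pow]
      rw [hsum_top, natDegree_C] at hdd
      rcases Nat.mul_eq_zero.mp hdd.symm with h0 | h0
      · omega
      · exact h0
    have hφC : φ = C (φ.coeff 0) := Polynomial.eq_C_of_natDegree_eq_zero he0
    set c₂ := φ.coeff 0 with hc₂def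
    have hc₂0 : c₂ ≠ 0 := fun h0 => hφne (by rw [hφC, h0, map_zero])
    -- (g) `gD = (X - C w)^n`
    have hGX : G = C (G.coeff n) * X ^ n := by
      ext l
      rw [coeff_C_mul, coeff_X_pow]
      rcases lt_trichotomy l n with h' | h' | h'
      · rw [hcoeff_lt l h', if_neg (by omega), mul_zero]
      · rw [h', if_pos rfl, mul_one]
      · rw [coeff_eq_zero_of_natDegree_lt (by rw [hGdeg]; omega), if_neg (by omega), mul_zero]
    have hgDX : gD = C (G.coeff n) * (X - C w) ^ n := by
      rw [← hGcomp, hGX]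
      simp [mul_comp, C_comp, pow_comp, X_comp]
    have hGcn1 : G.coeff n = 1 := by
      have hm : gD.leadingCoeff = 1 := (RatFunc.monic_denom g).leadingCoeff
      rw [hgDX, leadingCoeff_mul, leadingCoeff_C,
        Polynomial.Monic.leadingCoeff ((monic_X_sub_C w).pow n), mul_one] at hm
      exact hm
    have hgDfin : gD = (X - C w) ^ n := by
      rw [hgDX, hGcn1, map_one, one_mul]
    -- (h) the Möbius transformation
    have hucop : IsCoprime (C w * X + 1 : K[X]) X := by
      have hrw : (C w * X + 1 : K[X]) = 1 + X * C w := by ring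
      rw [hrw]
      exact isCoprime_one_left.add_mul_left_left (C w)
    set u := algebraMap K[X] (RatFunc K) (C w * X + 1) / algebraMap K[X] (RatFunc K) X
      with hudef
    set v := algebraMap K[X] (RatFunc K) 1 / algebraMap K[X] (RatFunc K) (X - C w)
      with hvdef
    obtain ⟨hunum, huden⟩ := num_denom_of_coprime monic_X hucop
    obtain ⟨hvnum, hvden⟩ := num_denom_of_coprime (monic_X_sub_C w) isCoprime_one_left
    have hunum : u.num = C w * X + 1 := hunum
    have huden : u.denom = X := huden
    have hvnum : v.num = 1 := hvnum
    have hvden : v.denom = X - C w := hvden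
    have hXne : algebraMap K[X] (RatFunc K) (Polynomial.X) ≠ 0 :=
      RatFunc.algebraMap_ne_zero X_ne_zero
    have hXCwne : algebraMap K[X] (RatFunc K) (Polynomial.X - C w) ≠ 0 :=
      RatFunc.algebraMap_ne_zero (X_sub_C_ne_zero w)
    have hvne : v ≠ 0 := by
      rw [hvdef, map_one]
      exact one_div_ne_zero hXCwne
    have huw : u - algebraMap K (RatFunc K) w = 1 / algebraMap K[X] (RatFunc K) Polynomial.X := by
      rw [hudef, hCmap]
      rw [div_sub' hXne, ← map_mul, ← map_sub]
      have hrr : (C w * X + 1 - X * C w : K[X]) = 1 := by ring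
      rw [hrr, map_one]
    have hhw : h - algebraMap K (RatFunc K) w
        = algebraMap K[X] (RatFunc K) (C c₂) / algebraMap K[X] (RatFunc K) hD := by
      rw [← hval, hCmap, div_sub' (RatFunc.algebraMap_ne_zero hDne), ← map_mul, ← map_sub]
      congr 1
      rw [mul_comm, ← hφdef]
      exact congrArg _ hφC
    refine ⟨u, v, ?_, ?_, ?_, ?_, ?_⟩
    · -- ratDeg u = 1
      rw [ratDeg, hunum, huden, natDegree_X]
      have hle : (C w * X + 1 : K[X]).natDegree ≤ 1 := by
        refine le_trans (natDegree_add_le _ _) ?_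
        refine max_le ?_ (by simp)
        exact le_trans natDegree_mul_le (by simp)
      exact max_eq_right hle
    · -- ratComp u v = X
      rw [ratComp_eq, hunum, huden]
      simp only [map_add, map_mul, map_one, Polynomial.aeval_X, Polynomial.aeval_C]
      have hXCw' : (RatFunc.X : RatFunc K) - RatFunc.C w ≠ 0 := by
        have := hXCwne
        rwa [map_sub, RatFunc.algebraMap_X, RatFunc.algebraMap_C] at this
      rw [hvdef, map_one, hCmap, ← RatFunc.algebraMap_X]
      field_simp
      rw [map_sub]; ring
    · -- ratComp v u = X
      rw [ratComp_eq, hvnum, hvden, map_one]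
      simp only [map_sub, Polynomial.aeval_X, Polynomial.aeval_C]
      rw [huw, ← RatFunc.algebraMap_X]
      rw [one_div_one_div]
    · -- g ∘ u is a polynomial
      refine ⟨homog (C w * X + 1) X gN n, ?_⟩
      rw [ratComp_eq, ← hgNdef, ← hgDdef, hgDfin,
        map_homog (C w * X + 1) gN X_ne_zero hgN, ← hudef]
      have haevalgD : Polynomial.aeval u ((Polynomial.X - C w : K[X]) ^ n)
          = (1 / algebraMap K[X] (RatFunc K) Polynomial.X) ^ n := by
        rw [map_pow, map_sub, Polynomial.aeval_X, Polynomial.aeval_C, huw]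
      rw [haevalgD, div_pow, one_pow, div_div_eq_mul_div, div_one, mul_comm]
    · -- v ∘ h is a polynomial
      refine ⟨C c₂⁻¹ * hD, ?_⟩
      rw [ratComp_eq, hvnum, hvden, map_one]
      simp only [map_sub, Polynomial.aeval_X, Polynomial.aeval_C]
      rw [hhw, one_div_div, map_mul]
      have hCinv : algebraMap K[X] (RatFunc K) (C c₂⁻¹)
          = (algebraMap K[X] (RatFunc K) (C c₂))⁻¹ := by
        refine eq_inv_of_mul_eq_one_left ?_
        rw [← map_mul, ← C_mul, inv_mul_cancel₀ hc₂0, map_one, map_one]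
      rw [div_eq_mul_inv, ← hCinv, mul_comm]
end

section
/- If f ∈ K(x)\K satisfies |Γ_K(f)| = deg f, then the field extension K(f) ⊆ K(x) is normal. -/
open Polynomial

section Aux

variable {K : Type*} [Field K]

lemma aeval_ratFunc_X (p : K[X]) :
    Polynomial.aeval (RatFunc.X : RatFunc K) p = algebraMap K[X] (RatFunc K) p := by
  have := Polynomial.aeval_algHom_apply (IsScalarTower.toAlgHom K K[X] (RatFunc K))
    Polynomial.X p
  simpa using this

lemma transcendental_of_num_denom {u : RatFunc K}
    (h : 0 < max u.num.natDegree u.denom.natDegree) : Transcendental K u := by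
  intro halg
  have hint : IsIntegral K u := halg.isIntegral
  have hint2 : IsIntegral K[X] u := hint.tower_top
  obtain ⟨q, hq⟩ := IsIntegrallyClosed.isIntegral_iff.mp hint2
  have hnum : u.num = q := by rw [← hq, RatFunc.num_algebraMap]
  have hden : u.denom = 1 := by rw [← hq, RatFunc.denom_algebraMap]
  rw [hnum, hden] at h
  simp only [natDegree_one, max_eq_left (Nat.zero_le _)] at h
  have htr : Transcendental K q := Polynomial.transcendental q (by omega)
    (mem_nonZeroDivisors_of_ne_zero (Polynomial.leadingCoeff_ne_zero.mpr
      (fun h0 => by simp [h0] at h)))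
  obtain ⟨p, hp0, hpe⟩ := halg
  refine htr ⟨p, hp0, ?_⟩
  have : Polynomial.aeval u p = algebraMap K[X] (RatFunc K) (Polynomial.aeval q p) := by
    rw [← hq]
    exact (Polynomial.aeval_algHom_apply (IsScalarTower.toAlgHom K K[X] (RatFunc K)) q p)
  rw [this] at hpe
  exact (map_eq_zero_iff _ (IsFractionRing.injective K[X] (RatFunc K))).mp hpe

/-- The K-algebra endomorphism of `RatFunc K` substituting `u` for `X`. -/
noncomputable def subst {u : RatFunc K} (htr : Transcendental K u) :
    RatFunc K →ₐ[K] RatFunc K :=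
  IsFractionRing.liftAlgHom (g := Polynomial.aeval u)
    (transcendental_iff_injective.mp htr)

lemma subst_algebraMap {u : RatFunc K} (htr : Transcendental K u) (p : K[X]) :
    subst htr (algebraMap K[X] (RatFunc K) p) = Polynomial.aeval u p := by
  rw [subst, IsFractionRing.liftAlgHom_apply, IsFractionRing.lift_algebraMap]
  rfl

lemma subst_X {u : RatFunc K} (htr : Transcendental K u) :
    subst htr (RatFunc.X) = u := by
  rw [RatFunc.X, subst_algebraMap, Polynomial.aeval_X]

lemma subst_eq_ratComp {u : RatFunc K} (htr : Transcendental K u) (g : RatFunc K) :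
    subst htr g = RatFunc.eval (algebraMap K (RatFunc K)) u g := by
  conv_lhs => rw [← RatFunc.num_div_denom g]
  rw [map_div₀, subst_algebraMap, subst_algebraMap, RatFunc.eval]
  rw [← Polynomial.aeval_def, ← Polynomial.aeval_def]

/-- Equalizer of a `K`-algebra endomorphism of a field with the identity. -/
noncomputable def eqField {L : Type*} [Field L] [Algebra K L] (ψ : L →ₐ[K] L) :
    IntermediateField K L where
  carrier := {a | ψ a = a}
  mul_mem' ha hb := by simp only [Set.mem_setOf_eq, map_mul] at *; rw [ha, hb]
  add_mem' ha hb := by simp only [Set.mem_setOf_eq, map_add] at *; rw [ha, hb]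
  one_mem' := map_one ψ
  zero_mem' := map_zero ψ
  inv_mem' a ha := by simp only [Set.mem_setOf_eq, map_inv₀] at *; rw [ha]
  algebraMap_mem' := ψ.commutes

lemma adjoin_X_top (F : IntermediateField K (RatFunc K)) :
    IntermediateField.adjoin F {(RatFunc.X : RatFunc K)} = ⊤ := by
  rw [eq_top_iff]
  intro g _
  have hp : ∀ p : K[X], algebraMap K[X] (RatFunc K) p ∈
      IntermediateField.adjoin F {(RatFunc.X : RatFunc K)} := by
    intro p
    induction p using Polynomial.induction_on' with
    | add p q hp hq => rw [map_add]; exact add_mem hp hq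
    | monomial n a =>
        rw [← Polynomial.C_mul_X_pow_eq_monomial, map_mul, map_pow]
        refine mul_mem ?_ (pow_mem ?_ n)
        · have : algebraMap K[X] (RatFunc K) (Polynomial.C a)
              = algebraMap F (RatFunc K) ⟨algebraMap K (RatFunc K) a,
                  F.algebraMap_mem a⟩ := rfl
          rw [this]
          exact (IntermediateField.adjoin F _).algebraMap_mem _
        · exact IntermediateField.subset_adjoin _ _ rfl
  rw [← RatFunc.num_div_denom g]
  exact div_mem (hp _) (hp _)

theorem normal_of_fixGroup_card_eq' (f : RatFunc K)
    (hf : 0 < max f.num.natDegree f.denom.natDegree)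
    (h : {u : RatFunc K | max u.num.natDegree u.denom.natDegree = 1
        ∧ RatFunc.eval (algebraMap K (RatFunc K)) u f = f}.ncard
      = max f.num.natDegree f.denom.natDegree) :
    Normal (IntermediateField.adjoin K {f}) (RatFunc K) := by
  set F := IntermediateField.adjoin K {f} with hFdef
  have hfF : f ∈ F := IntermediateField.subset_adjoin K {f} rfl
  set f' : F := ⟨f, hfF⟩ with hf'def
  -- f is not constant
  have hfne : ∀ c : K, f ≠ algebraMap K (RatFunc K) c := by
    intro c hc
    rw [hc] at hf
    have h1 : (algebraMap K (RatFunc K) c) = RatFunc.C c := rfl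
    rw [h1] at hf
    simp at hf
  -- the polynomial over F killing X
  set P : Polynomial F := f.num.map (algebraMap K F) -
    Polynomial.C f' * (f.denom.map (algebraMap K F)) with hPdef
  have hmap : ∀ p : K[X], Polynomial.aeval (RatFunc.X : RatFunc K) (p.map (algebraMap K F))
      = algebraMap K[X] (RatFunc K) p := by
    intro p
    rw [Polynomial.aeval_map_algebraMap, aeval_ratFunc_X]
  have hcoe : algebraMap F (RatFunc K) f' = f := rfl
  have haev : Polynomial.aeval (RatFunc.X : RatFunc K) P = 0 := by
    simp only [hPdef, map_sub, map_mul, hmap, Polynomial.aeval_C, hcoe]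
    rw [sub_eq_zero]
    exact (div_eq_iff (RatFunc.algebraMap_ne_zero (RatFunc.denom_ne_zero f))).mp
      (RatFunc.num_div_denom f)
  have hP0 : P ≠ 0 := by
    intro hP
    rw [hPdef, sub_eq_zero] at hP
    have hd := congrArg (fun q => Polynomial.coeff q f.denom.natDegree) hP
    simp only [Polynomial.coeff_map, Polynomial.coeff_C_mul] at hd
    have hmon : (f.denom.coeff f.denom.natDegree) = 1 := (RatFunc.monic_denom f)
    rw [hmon, map_one, mul_one] at hd
    have h2 := congrArg (algebraMap F (RatFunc K)) hd
    rw [hcoe] at h2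
    exact hfne _ (h2.symm.trans (IsScalarTower.algebraMap_apply K F (RatFunc K) _).symm)
  have hdeg : P.natDegree ≤ max f.num.natDegree f.denom.natDegree := by
    refine (Polynomial.natDegree_sub_le _ _).trans (max_le ?_ ?_)
    · exact Polynomial.natDegree_map_le.trans (le_max_left _ _)
    · exact ((Polynomial.natDegree_C_mul_le _ _).trans
        Polynomial.natDegree_map_le).trans (le_max_right _ _)
  -- X is integral over F of degree ≤ n
  have halgX : IsAlgebraic F (RatFunc.X : RatFunc K) := ⟨P, hP0, haev⟩
  have hintX : IsIntegral F (RatFunc.X : RatFunc K) := halgX.isIntegral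
  haveI hfd1 : FiniteDimensional F
      (IntermediateField.adjoin F {(RatFunc.X : RatFunc K)}) :=
    IntermediateField.adjoin.finiteDimensional hintX
  have htop : IntermediateField.adjoin F {(RatFunc.X : RatFunc K)} = ⊤ := adjoin_X_top F
  let e : (IntermediateField.adjoin F {(RatFunc.X : RatFunc K)}) ≃ₐ[F] RatFunc K :=
    (IntermediateField.equivOfEq htop).trans IntermediateField.topEquiv
  haveI hfd : FiniteDimensional F (RatFunc K) :=
    LinearEquiv.finiteDimensional e.toLinearEquiv
  have hrank : Module.finrank F (RatFunc K) ≤ max f.num.natDegree f.denom.natDegree := by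
    have h1 : Module.finrank F (RatFunc K) =
        Module.finrank F (IntermediateField.adjoin F {(RatFunc.X : RatFunc K)}) :=
      (LinearEquiv.finrank_eq e.toLinearEquiv).symm
    rw [h1, IntermediateField.adjoin.finrank hintX]
    exact (Polynomial.natDegree_le_of_dvd (minpoly.dvd F _ haev) hP0).trans hdeg
  -- the fixing group embeds into the F-algebra endomorphisms
  set S : Set (RatFunc K) := {u : RatFunc K | max u.num.natDegree u.denom.natDegree = 1
      ∧ RatFunc.eval (algebraMap K (RatFunc K)) u f = f} with hSdef
  have hΘ : ∀ u : S, ∃ φ : RatFunc K →ₐ[F] RatFunc K, φ RatFunc.X = u.1 := by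
    rintro ⟨u, hu1, hu2⟩
    have htr : Transcendental K u := transcendental_of_num_denom (by omega)
    have hfix : ∀ a ∈ F, subst htr a = a := by
      have hle : F ≤ eqField (subst htr) := by
        rw [hFdef]
        refine IntermediateField.adjoin_le_iff.mpr ?_
        intro x hx
        rw [Set.mem_singleton_iff] at hx
        subst hx
        show subst htr x = x
        rw [subst_eq_ratComp]
        exact hu2
      exact fun a ha => hle ha
    refine ⟨⟨(subst htr).toRingHom, fun a => hfix a.1 a.2⟩, ?_⟩
    exact subst_X htr
  choose Θ hΘX using hΘ
  have hinj : Function.Injective Θ := by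
    intro u v huv
    have hXX : Θ u RatFunc.X = Θ v RatFunc.X := by rw [huv]
    rw [hΘX, hΘX] at hXX
    exact Subtype.ext hXX
  have c1 : max f.num.natDegree f.denom.natDegree
      ≤ Nat.card (RatFunc K →ₐ[F] RatFunc K) := by
    rw [← h, ← Nat.card_coe_set_eq]
    exact Nat.card_le_card_of_injective Θ hinj
  have c2 : Nat.card (RatFunc K →ₐ[F] RatFunc K) ≤ Module.finrank F (RatFunc K) :=
    card_algHom_le_finrank F (RatFunc K) (RatFunc K)
  have heq : Fintype.card (RatFunc K ≃ₐ[F] RatFunc K) = Module.finrank F (RatFunc K) := by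
    rw [← Nat.card_eq_fintype_card,
      Nat.card_congr (algEquivEquivAlgHom F (RatFunc K)).toEquiv]
    omega
  have hgal : IsGalois F (RatFunc K) := IsGalois.of_card_aut_eq_finrank F (RatFunc K) (by rw [Nat.card_eq_fintype_card]; exact heq)
  exact hgal.to_normal

end Aux

/-- If `|Γ_K(f)| = deg f` then the extension `K(f) ⊆ K(x)` is normal. -/
theorem normal_of_fixGroup_card_eq {K : Type*} [Field K] (f : RatFunc K)
    (hf : 0 < ratDeg f) (h : (fixGroup f).ncard = ratDeg f) :
    Normal (IntermediateField.adjoin K {f}) (RatFunc K) :=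
  normal_of_fixGroup_card_eq' f hf h
end

section
/- Let f ∈ K[x] be a tame polynomial (char K does not divide deg f). If f = g₁∘h₁ = g₂∘h₂ with polynomial components and deg h₁ = deg h₂, then there is a linear polynomial u(x) = ax+b, a ≠ 0, with h₁ = u∘h₂. -/
open Polynomial

/-- If `p, q` are monic of degree `m`, `(d : K) ≠ 0`, and `p^d - q^d` has degree
`≤ (d-1)*m`, then `p - q` is constant. -/
lemma monic_pow_sub_pow_aux {K : Type*} [Field K] {p q : K[X]} {m d : ℕ}
    (hp : p.Monic) (hq : q.Monic) (hpm : p.natDegree = m) (hqm : q.natDegree = m)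
    (hdK : (d : K) ≠ 0)
    (hdeg : (p ^ d - q ^ d).natDegree ≤ (d - 1) * m) : ∃ c : K, p = q + C c := by
  by_cases hpq : p = q
  · exact ⟨0, by simp [hpq]⟩
  · set S : K[X] := ∑ i ∈ Finset.range d, p ^ i * q ^ (d - 1 - i) with hS
    have hterm : ∀ i ∈ Finset.range d, (p ^ i * q ^ (d - 1 - i)).natDegree = (d - 1) * m := by
      intro i hi
      rw [Finset.mem_range] at hi
      have h1 : (p ^ i).Monic := hp.pow _
      have h2 : (q ^ (d - 1 - i)).Monic := hq.pow _
      rw [h1.natDegree_mul h2, hp.natDegree_pow, hq.natDegree_pow, hpm, hqm,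
        ← Nat.add_mul]
      congr 1
      omega
    have hcoeff : S.coeff ((d - 1) * m) = (d : K) := by
      rw [hS, finset_sum_coeff]
      have : ∀ i ∈ Finset.range d, (p ^ i * q ^ (d - 1 - i)).coeff ((d - 1) * m) = 1 := by
        intro i hi
        have h1 : (p ^ i).Monic := hp.pow _
        have h2 : (q ^ (d - 1 - i)).Monic := hq.pow _
        rw [← hterm i hi]
        exact (h1.mul h2).coeff_natDegree
      rw [Finset.sum_congr rfl this]
      simp
    have hSne : S ≠ 0 := fun h => hdK (by rw [← hcoeff, h, coeff_zero])
    have hSdeg_le : S.natDegree ≤ (d - 1) * m := by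
      refine (natDegree_sum_le _ _).trans ?_
      rw [Finset.fold_max_le]
      exact ⟨Nat.zero_le _, fun i hi => le_of_eq (hterm i hi)⟩
    have hSdeg : S.natDegree = (d - 1) * m :=
      le_antisymm hSdeg_le (le_natDegree_of_ne_zero (hcoeff ▸ hdK))
    have hfact : S * (p - q) = p ^ d - q ^ d := geom_sum₂_mul p q d
    have hsub : p - q ≠ 0 := sub_ne_zero.mpr hpq
    have : S.natDegree + (p - q).natDegree ≤ (d - 1) * m := by
      rw [← natDegree_mul hSne hsub, hfact]; exact hdeg
    have h0 : (p - q).natDegree = 0 := by omega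
    obtain ⟨c, hc⟩ := natDegree_eq_zero.mp h0
    exact ⟨c, by rw [hc]; ring⟩

/-- Uniqueness of right components of equal degree for tame polynomials: if
`f = g₁ ∘ h₁ = g₂ ∘ h₂` with `deg h₁ = deg h₂`, then `h₁ = (ax+b) ∘ h₂`. -/
theorem tame_unique_right_component {K : Type*} [Field K]
    (f g₁ g₂ h₁ h₂ : K[X])
    (hf : 0 < f.natDegree) (hg₁ : 0 < g₁.natDegree) (hg₂ : 0 < g₂.natDegree)
    (hh₁ : 0 < h₁.natDegree) (hh₂ : 0 < h₂.natDegree)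
    (htame : ¬ (ringChar K : ℕ) ∣ f.natDegree)
    (e₁ : f = g₁.comp h₁) (e₂ : f = g₂.comp h₂)
    (hdeg : h₁.natDegree = h₂.natDegree) :
    ∃ a b : K, a ≠ 0 ∧ h₁ = (C a * X + C b).comp h₂ := by
  set n := f.natDegree with hn
  set m := h₂.natDegree with hm
  set d := g₁.natDegree with hd
  have hn₁ : n = d * m := by rw [hn, e₁, natDegree_comp, hdeg]
  have hn₂ : n = g₂.natDegree * m := by rw [hn, e₂, natDegree_comp]
  have hd₂ : g₂.natDegree = d :=
    Nat.eq_of_mul_eq_mul_right hh₂ (by rw [← hn₂, hn₁])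
  have hdK : (d : K) ≠ 0 := by
    intro h
    exact htame (((ringChar.spec K d).mp h).mul_right m |>.trans (dvd_of_eq hn₁.symm))
  have hh₁0 : h₁ ≠ 0 := fun h => by simp [h] at hh₁
  have hh₂0 : h₂ ≠ 0 := fun h => by
    have : m = 0 := by rw [hm, h, natDegree_zero]
    omega
  have hg₁0 : g₁ ≠ 0 := fun h => by
    have : d = 0 := by rw [hd, h, natDegree_zero]
    omega
  have hg₂0 : g₂ ≠ 0 := fun h => by simp [h] at hg₂
  set a₁ := h₁.leadingCoeff with ha₁
  set a₂ := h₂.leadingCoeff with ha₂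
  have ha₁0 : a₁ ≠ 0 := leadingCoeff_ne_zero.mpr hh₁0
  have ha₂0 : a₂ ≠ 0 := leadingCoeff_ne_zero.mpr hh₂0
  set p : K[X] := C a₁⁻¹ * h₁ with hpdef
  set q : K[X] := C a₂⁻¹ * h₂ with hqdef
  have hpmonic : p.Monic := by
    show p.leadingCoeff = 1
    rw [hpdef, leadingCoeff_mul, leadingCoeff_C, inv_mul_cancel₀ ha₁0]
  have hqmonic : q.Monic := by
    show q.leadingCoeff = 1
    rw [hqdef, leadingCoeff_mul, leadingCoeff_C, inv_mul_cancel₀ ha₂0]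
  have hpm : p.natDegree = m := by rw [hpdef, natDegree_C_mul (inv_ne_zero ha₁0), hdeg]
  have hqm : q.natDegree = m := by rw [hqdef, natDegree_C_mul (inv_ne_zero ha₂0)]
  have hp_back : C a₁ * p = h₁ := by
    rw [hpdef, ← mul_assoc, ← C_mul, mul_inv_cancel₀ ha₁0, C_1, one_mul]
  have hq_back : C a₂ * q = h₂ := by
    rw [hqdef, ← mul_assoc, ← C_mul, mul_inv_cancel₀ ha₂0, C_1, one_mul]
  -- the top-part expansion bound, proven uniformly
  have key : ∀ (g h : K[X]) (a : K) (pp : K[X]), g.natDegree = d → f = g.comp h →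
      C a * pp = h → h.natDegree = m →
      (f - C (g.leadingCoeff * a ^ d) * pp ^ d).natDegree ≤ (d - 1) * m := by
    intro g h a pp hgd hcomp hback hhm
    have h1 : C (g.leadingCoeff * a ^ d) * pp ^ d = C g.leadingCoeff * h ^ d := by
      rw [← hback, mul_pow, C_mul, C_pow]; ring
    have h2 : f - C g.leadingCoeff * h ^ d = g.eraseLead.comp h := by
      have h3 := congrArg (fun r : K[X] => r.comp h) (eraseLead_add_C_mul_X_pow g)
      simp only [add_comp, mul_comp, C_comp, X_pow_comp, hgd] at h3
      rw [hcomp, ← h3]; ring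
    rw [h1, h2]
    calc (g.eraseLead.comp h).natDegree ≤ g.eraseLead.natDegree * h.natDegree :=
          natDegree_comp_le
      _ ≤ (d - 1) * m :=
          Nat.mul_le_mul ((eraseLead_natDegree_le g).trans (le_of_eq (by rw [hgd])))
            (le_of_eq hhm)
  set c₁ := g₁.leadingCoeff * a₁ ^ d with hc₁
  set c₂ := g₂.leadingCoeff * a₂ ^ d with hc₂
  have hc₁0 : c₁ ≠ 0 := mul_ne_zero (leadingCoeff_ne_zero.mpr hg₁0) (pow_ne_zero _ ha₁0)
  have hb₁ : (f - C c₁ * p ^ d).natDegree ≤ (d - 1) * m :=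
    key g₁ h₁ a₁ p rfl e₁ hp_back hdeg
  have hb₂ : (f - C c₂ * q ^ d).natDegree ≤ (d - 1) * m :=
    key g₂ h₂ a₂ q hd₂ e₂ hq_back rfl
  have hdiff : (C c₁ * p ^ d - C c₂ * q ^ d).natDegree ≤ (d - 1) * m := by
    have : C c₁ * p ^ d - C c₂ * q ^ d = (f - C c₂ * q ^ d) - (f - C c₁ * p ^ d) := by ring
    rw [this]
    exact (natDegree_sub_le _ _).trans (max_le hb₂ hb₁)
  have hlt : (d - 1) * m < n := by
    rw [hn₁]
    exact (Nat.mul_lt_mul_right hh₂).mpr (by omega)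
  have hpd : (p ^ d).natDegree = n := by
    rw [hpmonic.natDegree_pow, hpm, hn₁]
  have hqd : (q ^ d).natDegree = n := by
    rw [hqmonic.natDegree_pow, hqm, hn₁]
  have hcc : c₁ = c₂ := by
    have h0 : (C c₁ * p ^ d - C c₂ * q ^ d).coeff n = 0 :=
      coeff_eq_zero_of_natDegree_lt (lt_of_le_of_lt hdiff hlt)
    rw [coeff_sub, coeff_C_mul, coeff_C_mul, ← hpd, (hpmonic.pow d).coeff_natDegree,
      hpd, ← hqd, (hqmonic.pow d).coeff_natDegree, mul_one, mul_one, sub_eq_zero] at h0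
    exact h0
  have hfinal : (p ^ d - q ^ d).natDegree ≤ (d - 1) * m := by
    have h1 : p ^ d - q ^ d = C c₁⁻¹ * (C c₁ * p ^ d - C c₂ * q ^ d) := by
      rw [← hcc, mul_sub, ← mul_assoc, ← mul_assoc, ← C_mul, inv_mul_cancel₀ hc₁0, C_1,
        one_mul, one_mul]
    rw [h1, natDegree_C_mul (inv_ne_zero hc₁0)]
    exact hdiff
  obtain ⟨t, hpt⟩ := monic_pow_sub_pow_aux hpmonic hqmonic hpm hqm hdK hfinal
  refine ⟨a₁ * a₂⁻¹, a₁ * t, mul_ne_zero ha₁0 (inv_ne_zero ha₂0), ?_⟩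
  have hinv : a₁ * a₂⁻¹ * a₂ = a₁ := by field_simp
  rw [add_comp, mul_comp, C_comp, X_comp, C_comp, ← hp_back, hpt, ← hq_back,
    ← mul_assoc, ← C_mul, hinv, C_mul]
  ring
end

section
/- Let K be a field and f ∈ K[x] a tame polynomial (char K ∤ deg f). Then the fixing group Γ_K(f) = {Möbius transformations u : f∘u = f} is cyclic, and moreover every element of Γ_K(f) is of the form ax+b with a ≠ 0. -/
open Polynomial

section Aux

variable {K : Type*} [Field K]

/-- `Fixes f a b` means the affine substitution `x ↦ a x + b` fixes `f`. -/
def Fixes (f : K[X]) (a b : K) : Prop := f.comp (C a * X + C b) = f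

lemma affine_comp (a b a' b' : K) :
    (C a * X + C b).comp (C a' * X + C b') = C (a * a') * X + C (a * b' + b) := by
  simp only [add_comp, mul_comp, C_comp, X_comp, C_mul, C_add]
  ring

lemma Fixes.mul {f : K[X]} {a b a' b' : K} (h : Fixes f a b) (h' : Fixes f a' b') :
    Fixes f (a * a') (a * b' + b) := by
  unfold Fixes at *
  rw [← affine_comp, ← comp_assoc, h, h']

lemma Fixes.one (f : K[X]) : Fixes f 1 0 := by
  simp [Fixes]

lemma Fixes.inv {f : K[X]} {a b : K} (ha : a ≠ 0) (h : Fixes f a b) :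
    Fixes f a⁻¹ (-(a⁻¹ * b)) := by
  unfold Fixes at *
  conv_lhs => rw [← h]
  rw [comp_assoc, affine_comp, mul_inv_cancel₀ ha]
  have : a * -(a⁻¹ * b) + b = 0 := by rw [mul_neg, mul_inv_cancel_left₀ ha, neg_add_cancel]
  rw [this]
  simp

lemma Fixes.pow_eq_one {f : K[X]} (hf : 0 < f.natDegree) {a b : K} (ha : a ≠ 0)
    (h : Fixes f a b) : a ^ f.natDegree = 1 := by
  have hc := congrArg leadingCoeff h
  rw [Fixes] at h
  rw [leadingCoeff_comp (by rw [natDegree_linear ha]; exact one_ne_zero),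
    leadingCoeff_linear ha] at hc
  have hl : f.leadingCoeff ≠ 0 := by
    rw [Ne, leadingCoeff_eq_zero]
    intro h0
    simp [h0] at hf
  exact mul_left_cancel₀ hl (hc.trans (mul_one f.leadingCoeff).symm)

lemma fixes_b_eq_zero {f : K[X]} (hf : 0 < f.natDegree)
    (htame : ¬ (ringChar K : ℕ) ∣ f.natDegree) {b : K}
    (h : f.comp (C 1 * X + C b) = f) : b = 0 := by
  set n := f.natDegree with hn
  have hnK : (n : K) ≠ 0 := fun h0 => htame ((CharP.cast_eq_zero_iff K (ringChar K) n).mp h0)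
  have h' : taylor b f = f := by
    rw [taylor_apply]
    rw [C_1, one_mul] at h
    exact h
  have hcoeff := congrArg (fun p : K[X] => p.coeff (n - 1)) h'
  simp only [taylor_coeff] at hcoeff
  have hdeg : (hasseDeriv (n - 1) f).natDegree < 2 := by
    have := natDegree_hasseDeriv_le f (n - 1)
    omega
  rw [eval_eq_sum_range' hdeg] at hcoeff
  rw [Finset.sum_range_succ, Finset.sum_range_one] at hcoeff
  rw [hasseDeriv_coeff, hasseDeriv_coeff] at hcoeff
  have h01 : 0 + (n - 1) = n - 1 := by omega
  have h11 : 1 + (n - 1) = n := by omega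
  rw [h01, h11, Nat.choose_self] at hcoeff
  have hch : n.choose (n - 1) = n := by
    have h2 : n.choose (n - (n - 1)) = n.choose (n - 1) := Nat.choose_symm (Nat.sub_le n 1)
    have h3 : n - (n - 1) = 1 := by omega
    rw [h3, Nat.choose_one_right] at h2
    omega
  rw [hch] at hcoeff
  have hl : f.coeff n ≠ 0 := by
    have hf0 : f ≠ 0 := fun h0 => by rw [hn, h0, natDegree_zero] at hf; exact lt_irrefl 0 hf
    rw [hn, coeff_natDegree]
    exact leadingCoeff_ne_zero.mpr hf0
  have : (n : K) * f.coeff n * b = 0 := by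
    rw [Nat.cast_one, one_mul, pow_zero, mul_one, pow_one] at hcoeff
    linear_combination hcoeff
  rcases mul_eq_zero.mp this with h0 | h0
  · exact absurd (mul_eq_zero.mp h0) (by push_neg; exact ⟨hnK, hl⟩)
  · exact h0

lemma ratComp_algebraMap (p q : K[X]) :
    ratComp (algebraMap K[X] (RatFunc K) p) (algebraMap K[X] (RatFunc K) q)
      = algebraMap K[X] (RatFunc K) (p.comp q) := by
  rw [ratComp, RatFunc.eval_algebraMap]
  have h1 : algebraMap K[X] K[X] p = p := rfl
  rw [h1]
  have h2 : (algebraMap K[X] (RatFunc K)).comp Polynomial.C = algebraMap K (RatFunc K) := by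
    ext a
    simp [RatFunc.algebraMap_C]
  rw [show p.comp q = p.eval₂ Polynomial.C q from rfl]
  rw [Polynomial.hom_eval₂, h2]

lemma mem_fixGroup_of (f : K[X]) {a b : K} (ha : a ≠ 0) (h : f.comp (C a * X + C b) = f) :
    algebraMap K[X] (RatFunc K) (C a * X + C b) ∈ fixGroup (algebraMap K[X] (RatFunc K) f) := by
  constructor
  · rw [ratDeg, RatFunc.num_algebraMap, RatFunc.denom_algebraMap, natDegree_linear ha,
      natDegree_one]
    simp
  · rw [ratComp_algebraMap, h]

lemma mem_fixGroup_elim {f : K[X]} (hf : 0 < f.natDegree) {u : RatFunc K}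
    (hu : u ∈ fixGroup (algebraMap K[X] (RatFunc K) f)) :
    ∃ a b : K, a ≠ 0 ∧ f.comp (C a * X + C b) = f ∧
      u = algebraMap K[X] (RatFunc K) (C a * X + C b) := by
  obtain ⟨hdeg, hcomp⟩ := hu
  set φ := algebraMap K[X] (RatFunc K) with hφ
  set A := algebraMap K (RatFunc K) with hA
  set n := f.natDegree with hn
  set N := u.num with hN
  set D := u.denom with hD
  have hDne : D ≠ 0 := RatFunc.denom_ne_zero u
  have hφD : φ D ≠ 0 := RatFunc.algebraMap_ne_zero hDne
  have hu' : u = φ N / φ D := (RatFunc.num_div_denom u).symm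
  have hcomp' : f.eval₂ A u = φ f := by
    rw [ratComp, RatFunc.eval_algebraMap] at hcomp
    exact hcomp
  have hfl : f.coeff n ≠ 0 := by
    have hf0 : f ≠ 0 := fun h0 => by rw [hn, h0, natDegree_zero] at hf; exact lt_irrefl 0 hf
    rw [hn, coeff_natDegree]
    exact leadingCoeff_ne_zero.mpr hf0
  have key : (∑ i ∈ Finset.range (n + 1), C (f.coeff i) * N ^ i * D ^ (n - i)) = f * D ^ n := by
    apply RatFunc.algebraMap_injective K
    push_cast [map_sum, map_mul, map_pow]
    have step : ∀ i ∈ Finset.range (n + 1),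
        φ (C (f.coeff i)) * φ N ^ i * φ D ^ (n - i) = A (f.coeff i) * u ^ i * φ D ^ n := by
      intro i hi
      rw [Finset.mem_range] at hi
      have hin : i + (n - i) = n := by omega
      have hφDi : φ D ^ i ≠ 0 := pow_ne_zero _ hφD
      rw [hu', div_pow, show φ D ^ n = φ D ^ i * φ D ^ (n - i) by rw [← pow_add, hin],
        show A (f.coeff i) = φ (C (f.coeff i)) by
          rw [hA, hφ, IsScalarTower.algebraMap_apply K K[X] (RatFunc K), Polynomial.algebraMap_eq]]
      field_simp
    rw [Finset.sum_congr rfl step, ← Finset.sum_mul, ← eval₂_eq_sum_range, hcomp']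
  have hDdvd : D ∣ C (f.coeff n) * N ^ n := by
    have h1 : D ∣ f * D ^ n := dvd_mul_of_dvd_right (dvd_pow_self D (by omega : n ≠ 0)) f
    rw [← key, Finset.sum_range_succ] at h1
    have h2 : D ∣ ∑ i ∈ Finset.range n, C (f.coeff i) * N ^ i * D ^ (n - i) := by
      apply Finset.dvd_sum
      intro i hi
      rw [Finset.mem_range] at hi
      exact dvd_mul_of_dvd_right (dvd_pow_self D (by omega : n - i ≠ 0)) _
    have h3 : D ∣ C (f.coeff n) * N ^ n * D ^ (n - n) := (dvd_add_right h2).mp h1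
    simpa using h3
  have hco : IsCoprime D (N ^ n) := (RatFunc.isCoprime_num_denom u).symm.pow_right
  have hunit : IsUnit D :=
    isUnit_of_dvd_unit (hco.dvd_of_dvd_mul_right hDdvd) (isUnit_C.mpr (isUnit_iff_ne_zero.mpr hfl))
  have hD1 : D = 1 := (RatFunc.monic_denom u).eq_one_of_isUnit hunit
  have huN : u = φ N := by rw [hu', hD1]; simp
  have hN1 : N.natDegree = 1 := by
    rw [ratDeg, ← hD, hD1, natDegree_one] at hdeg
    simpa using hdeg
  have hNne : N ≠ 0 := fun h0 => by rw [h0, natDegree_zero] at hN1; exact one_ne_zero hN1.symm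
  have ha : N.coeff 1 ≠ 0 := by
    rw [← hN1, coeff_natDegree]
    exact leadingCoeff_ne_zero.mpr hNne
  have hNrep : N = C (N.coeff 1) * X + C (N.coeff 0) :=
    eq_X_add_C_of_natDegree_le_one (le_of_eq hN1)
  refine ⟨N.coeff 1, N.coeff 0, ha, ?_, ?_⟩
  · apply RatFunc.algebraMap_injective K
    rw [← ratComp_algebraMap, ← hNrep, ← huN]
    exact hcomp
  · rw [huN, ← hNrep]

end Aux

/-- The fixing group of a tame polynomial is cyclic, and all its elements are
affine maps `ax + b` with `a ≠ 0`. -/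
theorem fixGroup_tame_cyclic {K : Type*} [Field K] (f : K[X])
    (hf : 0 < f.natDegree) (htame : ¬ (ringChar K : ℕ) ∣ f.natDegree) :
    (∃ γ ∈ fixGroup (algebraMap K[X] (RatFunc K) f),
      ∀ u ∈ fixGroup (algebraMap K[X] (RatFunc K) f),
        ∃ n : ℕ, u = (fun v => ratComp γ v)^[n] RatFunc.X) ∧
    (∀ u ∈ fixGroup (algebraMap K[X] (RatFunc K) f),
      ∃ a b : K, a ≠ 0 ∧ u = RatFunc.C a * RatFunc.X + RatFunc.C b) := by
  have part2 : ∀ u ∈ fixGroup (algebraMap K[X] (RatFunc K) f),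
      ∃ a b : K, a ≠ 0 ∧ u = RatFunc.C a * RatFunc.X + RatFunc.C b := by
    intro u hu
    obtain ⟨a, b, ha, -, hrep⟩ := mem_fixGroup_elim hf hu
    refine ⟨a, b, ha, ?_⟩
    rw [hrep]
    simp [map_add, map_mul, RatFunc.algebraMap_C, RatFunc.algebraMap_X]
  refine ⟨?_, part2⟩
  -- the subgroup of multipliers
  let S : Subgroup Kˣ :=
    { carrier := {a : Kˣ | ∃ b : K, Fixes f (a : K) b}
      one_mem' := ⟨0, by rw [Units.val_one]; exact Fixes.one f⟩
      mul_mem' := by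
        rintro a a' ⟨b, hb⟩ ⟨b', hb'⟩
        exact ⟨(a : K) * b' + b, by rw [Units.val_mul]; exact hb.mul hb'⟩
      inv_mem' := by
        rintro a ⟨b, hb⟩
        exact ⟨-((a : K)⁻¹ * b), by rw [Units.val_inv_eq_inv_val]; exact hb.inv a.ne_zero⟩ }
  have hSle : ∀ a ∈ S, a ∈ rootsOfUnity f.natDegree K := by
    rintro a ⟨b, hb⟩
    rw [mem_rootsOfUnity']
    exact hb.pow_eq_one hf a.ne_zero
  haveI : NeZero f.natDegree := ⟨hf.ne'⟩
  haveI : Finite ((rootsOfUnity f.natDegree K : Subgroup Kˣ) : Set Kˣ) := by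
    rw [SetLike.coe_sort_coe]
    infer_instance
  haveI : Finite S := Finite.Set.subset ((rootsOfUnity f.natDegree K : Subgroup Kˣ) : Set Kˣ) hSle
  obtain ⟨g, hg⟩ := IsCyclic.exists_monoid_generator (α := S)
  obtain ⟨b₀, hb₀⟩ := g.2
  set γ := algebraMap K[X] (RatFunc K) (C ((g : Kˣ) : K) * X + C b₀) with hγ
  have iter : ∀ k : ℕ, ∃ b' : K, Fixes f (((g : Kˣ) : K) ^ k) b' ∧
      (fun v => ratComp γ v)^[k] RatFunc.X
        = algebraMap K[X] (RatFunc K) (C (((g : Kˣ) : K) ^ k) * X + C b') := by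
    intro k
    induction k with
    | zero =>
      refine ⟨0, by rw [pow_zero]; exact Fixes.one f, ?_⟩
      rw [Function.iterate_zero, id_eq, pow_zero,
        show C (1 : K) * X + C (0 : K) = X by simp, RatFunc.algebraMap_X]
    | succ k ih =>
      obtain ⟨b', hb', hrep⟩ := ih
      refine ⟨((g : Kˣ) : K) * b' + b₀, ?_, ?_⟩
      · have := hb₀.mul hb'
        rwa [← pow_succ'] at this
      · rw [Function.iterate_succ_apply', hrep, hγ, ratComp_algebraMap, affine_comp, ← pow_succ']
  refine ⟨γ, mem_fixGroup_of f (Units.ne_zero _) hb₀, ?_⟩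
  intro u hu
  obtain ⟨a, b, ha, hfix, hrep⟩ := mem_fixGroup_elim hf hu
  have haS : Units.mk0 a ha ∈ S := ⟨b, hfix⟩
  obtain ⟨k, hk⟩ := hg ⟨Units.mk0 a ha, haS⟩
  have hak : ((g : Kˣ) : K) ^ k = a := by
    have := congrArg (fun x : S => ((x : Kˣ) : K)) hk
    simpa using this
  obtain ⟨b', hb', hrep'⟩ := iter k
  rw [hak] at hb' hrep'
  have hbb : b = b' := by
    have h1 : Fixes f (a⁻¹ * a) (a⁻¹ * b + -(a⁻¹ * b')) := (hb'.inv ha).mul hfix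
    rw [inv_mul_cancel₀ ha] at h1
    have h0 := fixes_b_eq_zero hf htame h1
    -- h0 : b + -b' = 0
    field_simp at h0
    linear_combination h0
  exact ⟨k, by rw [hrep, hrep', hbb]⟩
end
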